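/- Let L be a continuous dcpo. For any directed family 𝒢 (ordered by reverse inclusion) of nonempty Scott compact saturated subsets of L, the intersection ⋂𝒢 is a nonempty Scott compact saturated subset of L. -/

import Mathlib

open Set

variable {L : Type*} [CompletePartialOrder L] [TopologicalSpace L] [Topology.IsScott L Set.univ]

/-- The way-below relation in the dcpo `L`. -/
def wayBelow (x y : L) : Prop :=
  ∀ d : Set L, d.Nonempty → DirectedOn (· ≤ ·) d → y ≤ sSup d → ∃ z ∈ d, x ≤ z

/-- `L` is a continuous dcpo: every element is the directed supremum of the elements
way below it. -/
def ContinuousDcpo (L : Type*) [CompletePartialOrder L] : Prop :=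
  ∀ x : L, {y : L | wayBelow y x}.Nonempty ∧
    DirectedOn (· ≤ ·) {y : L | wayBelow y x} ∧ IsLUB {y : L | wayBelow y x} x

/-- `K` is saturated: it is the intersection of its open neighborhoods. -/
def Saturated (K : Set L) : Prop := K = ⋂₀ {U : Set L | IsOpen U ∧ K ⊆ U}

section Aux

variable {x y z x' y' : L}

lemma wayBelow_le {x y : L} (h : wayBelow x y) : x ≤ y := by
  have hdir : DirectedOn (· ≤ ·) ({y} : Set L) := by
    intro a ha b hb
    exact ⟨y, rfl, by simp_all, by simp_all⟩
  have hlub := CompletePartialOrder.lubOfDirected ({y} : Set L) hdir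
  obtain ⟨z, hz, hxz⟩ := h {y} ⟨y, rfl⟩ hdir (hlub.1 rfl)
  simp only [mem_singleton_iff] at hz
  exact hz ▸ hxz

lemma wayBelow_mono (hx : x' ≤ x) (h : wayBelow x y) (hy : y ≤ y') : wayBelow x' y' := by
  intro d hdne hdir hle
  obtain ⟨z, hz, hxz⟩ := h d hdne hdir (hy.trans hle)
  exact ⟨z, hz, hx.trans hxz⟩

/-- Interpolation property of continuous dcpos. -/
lemma wayBelow_interpolate (hcont : ContinuousDcpo L) (h : wayBelow x y) :
    ∃ z, wayBelow x z ∧ wayBelow z y := by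
  classical
  set E : Set L := {a | ∃ b, wayBelow a b ∧ wayBelow b y} with hE
  have hEne : E.Nonempty := by
    obtain ⟨b, hb⟩ := (hcont y).1
    obtain ⟨a, ha⟩ := (hcont b).1
    exact ⟨a, b, ha, hb⟩
  have hEdir : DirectedOn (· ≤ ·) E := by
    rintro a1 ⟨b1, hab1, hb1⟩ a2 ⟨b2, hab2, hb2⟩
    obtain ⟨b, hb, hb1b, hb2b⟩ := (hcont y).2.1 b1 hb1 b2 hb2
    have ha1b : wayBelow a1 b := wayBelow_mono le_rfl hab1 hb1b
    have ha2b : wayBelow a2 b := wayBelow_mono le_rfl hab2 hb2b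
    obtain ⟨a, ha, h1a, h2a⟩ := (hcont b).2.1 a1 ha1b a2 ha2b
    exact ⟨a, ⟨b, ha, hb⟩, h1a, h2a⟩
  have hlubE := CompletePartialOrder.lubOfDirected E hEdir
  have hyle : y ≤ sSup E := by
    exact (hcont y).2.2.2 fun b hb => (hcont b).2.2.2 fun a ha => hlubE.1 ⟨b, ha, hb⟩
  obtain ⟨z, hzE, hxz⟩ := h E hEne hEdir hyle
  obtain ⟨b, hzb, hby⟩ := hzE
  exact ⟨b, wayBelow_mono hxz hzb le_rfl, hby⟩

/-- In a continuous dcpo, the way-up set of a point is Scott open. -/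
lemma isOpen_wayUp (hcont : ContinuousDcpo L) (x : L) : IsOpen {y : L | wayBelow x y} := by
  rw [Topology.IsScott.isOpen_iff_isUpperSet_and_dirSupInaccOn (D := Set.univ)]
  constructor
  · intro a b hab ha
    exact wayBelow_mono le_rfl ha hab
  · intro d _ hdne hdir a hlub ha
    obtain ⟨z, hxz, hza⟩ := wayBelow_interpolate hcont ha
    have hsup := CompletePartialOrder.lubOfDirected d hdir
    have haeq : a = sSup d := hlub.unique hsup
    obtain ⟨w, hwd, hzw⟩ := hza d hdne hdir haeq.le
    exact ⟨w, hwd, wayBelow_mono le_rfl hxz hzw⟩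

/-- Sobriety-style lemma: a nonempty closed set that meets intersections of pairs of open
sets it meets is the lower closure of a point. -/
lemma exists_generic (hcont : ContinuousDcpo L) {C : Set L} (hC : IsClosed C)
    (hCne : C.Nonempty)
    (hprime : ∀ U V : Set L, IsOpen U → IsOpen V → (C ∩ U).Nonempty → (C ∩ V).Nonempty →
      (C ∩ (U ∩ V)).Nonempty) :
    ∃ p ∈ C, C ⊆ Iic p := by
  set D : Set L := {y | ∃ c ∈ C, wayBelow y c} with hD
  have hDsub : D ⊆ C := by
    rintro y ⟨c, hc, hyc⟩
    exact (Topology.IsScott.isLowerSet_of_isClosed hC) (wayBelow_le hyc) hc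
  have hDne : D.Nonempty := by
    obtain ⟨c, hc⟩ := hCne
    obtain ⟨y, hy⟩ := (hcont c).1
    exact ⟨y, c, hc, hy⟩
  have hDdir : DirectedOn (· ≤ ·) D := by
    rintro y1 ⟨c1, hc1, h1⟩ y2 ⟨c2, hc2, h2⟩
    have hm := hprime {y | wayBelow y1 y} {y | wayBelow y2 y}
      (isOpen_wayUp hcont y1) (isOpen_wayUp hcont y2) ⟨c1, hc1, h1⟩ ⟨c2, hc2, h2⟩
    obtain ⟨c, hc, hy1c, hy2c⟩ := hm
    obtain ⟨z, hz, h1z, h2z⟩ := (hcont c).2.1 y1 hy1c y2 hy2c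
    exact ⟨z, ⟨c, hc, hz⟩, h1z, h2z⟩
  have hlub := CompletePartialOrder.lubOfDirected D hDdir
  refine ⟨sSup D, ?_, ?_⟩
  · exact Topology.IsScott.dirSupClosed_of_isClosed hC hDsub hDne hDdir hlub
  · intro c hc
    exact (hcont c).2.2.2 fun y hy => hlub.1 ⟨c, hc, hy⟩

/-- Saturated sets in the Scott topology are upper sets. -/
lemma Saturated.isUpperSet {K : Set L} (h : Saturated K) : IsUpperSet K := by
  rw [h]
  exact isUpperSet_sInter fun U hU => Topology.IsScott.isUpperSet_of_isOpen (D := Set.univ) hU.1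

lemma chain_finset_lb {α : Type*} {c : Set (Set α)} (hc : IsChain (· ⊆ ·) c)
    (hcne : c.Nonempty) (t : Finset (Set α)) (ht : ↑t ⊆ c) :
    ∃ m ∈ c, ∀ A ∈ t, m ⊆ A := by
  classical
  induction t using Finset.induction_on with
  | empty => exact ⟨hcne.choose, hcne.choose_spec, by simp⟩
  | @insert A s hA ih =>
    have hsub : (↑s : Set (Set α)) ⊆ c := by
      intro B hB; exact ht (by simp [hB])
    obtain ⟨m, hm, hms⟩ := ih hsub
    have hAc : A ∈ c := ht (by simp)
    rcases hc.total hm hAc with h | h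
    · exact ⟨m, hm, fun B hB => by
        rcases Finset.mem_insert.1 hB with rfl | hB
        · exact h
        · exact hms B hB⟩
    · exact ⟨A, hAc, fun B hB => by
        rcases Finset.mem_insert.1 hB with rfl | hB
        · exact le_rfl
        · exact h.trans (hms B hB)⟩

/-- Well-filteredness: if the intersection of the directed family is contained in an open
set, then some member already is. -/
lemma well_filtered (hcont : ContinuousDcpo L) (𝒢 : Set (Set L)) (hne : 𝒢.Nonempty)
    (hdir : DirectedOn (fun A B : Set L => B ⊆ A) 𝒢)
    (hmem : ∀ K ∈ 𝒢, K.Nonempty ∧ IsCompact K ∧ Saturated K)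
    {U : Set L} (hU : IsOpen U) (hsub : ⋂₀ 𝒢 ⊆ U) : ∃ K ∈ 𝒢, K ⊆ U := by
  classical
  by_contra hcon
  push_neg at hcon
  have hmeet : ∀ K ∈ 𝒢, (Uᶜ ∩ K).Nonempty := by
    intro K hK
    obtain ⟨x, hxK, hxU⟩ := not_subset.1 (hcon K hK)
    exact ⟨x, hxU, hxK⟩
  set S : Set (Set L) := {C | IsClosed C ∧ C ⊆ Uᶜ ∧ ∀ K ∈ 𝒢, (C ∩ K).Nonempty} with hS
  have hUc : Uᶜ ∈ S := ⟨hU.isClosed_compl, subset_rfl, hmeet⟩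
  obtain ⟨m, -, hmS, hmin⟩ := zorn_superset_nonempty S (fun c hcS hchain hcne => by
    refine ⟨⋂₀ c, ⟨isClosed_sInter fun C hC => (hcS hC).1, ?_, ?_⟩,
      fun s hs => sInter_subset_of_mem hs⟩
    · obtain ⟨C0, hC0⟩ := hcne
      exact (sInter_subset_of_mem hC0).trans (hcS hC0).2.1
    · intro K hK
      obtain ⟨hKne, hKcomp, _⟩ := hmem K hK
      by_contra hmt
      rw [not_nonempty_iff_eq_empty] at hmt
      have : K ∩ ⋂ (C : c), (C : Set L) = ∅ := by
        rw [← hmt]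
        rw [inter_comm]
        congr 1
        ext x
        simp [sInter_eq_iInter]
      obtain ⟨t, ht⟩ := hKcomp.elim_finite_subfamily_closed (fun C : c => (C : Set L))
        (fun C => (hcS C.2).1) this
      -- t is a finite set of members of the chain; find a lower bound in the chain
      obtain ⟨m', hm'c, hm't⟩ := chain_finset_lb hchain hcne (t.image (fun C : c => (C : Set L)))
        (by intro B hB; simp only [Finset.coe_image, mem_image] at hB
            obtain ⟨C, _, rfl⟩ := hB; exact C.2)
      obtain ⟨x, hx1, hx2⟩ := (hcS hm'c).2.2 K hK
      have : x ∈ K ∩ ⋂ C ∈ t, (C : Set L) := by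
        refine ⟨hx2, mem_iInter₂.2 fun C hC => ?_⟩
        exact hm't C (Finset.mem_image_of_mem _ hC) hx1
      rw [ht] at this
      exact this) Uᶜ hUc
  obtain ⟨hmcl, hmU, hmK⟩ := hmS
  -- m is "prime": it meets the intersection of any two opens it meets
  have hprime : ∀ V W : Set L, IsOpen V → IsOpen W → (m ∩ V).Nonempty → (m ∩ W).Nonempty →
      (m ∩ (V ∩ W)).Nonempty := by
    intro V W hV hW hmV hmW
    by_contra hVW
    rw [not_nonempty_iff_eq_empty] at hVW
    have key : ∀ (A : Set L), IsOpen A → (m ∩ A).Nonempty →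
        (¬ ∀ K ∈ 𝒢, ((m ∩ Aᶜ) ∩ K).Nonempty) := by
      intro A hA hmA hall
      have hmem' : m ∩ Aᶜ ∈ S :=
        ⟨hmcl.inter hA.isClosed_compl, inter_subset_left.trans hmU, hall⟩
      have hle := hmin hmem' inter_subset_left
      obtain ⟨x, hx1, hx2⟩ := hmA
      exact (hle hx1).2 hx2
    have h1 := key V hV hmV
    have h2 := key W hW hmW
    push_neg at h1 h2
    obtain ⟨K1, hK1, hK1e⟩ := h1
    obtain ⟨K2, hK2, hK2e⟩ := h2
    obtain ⟨K, hK, hKsub1, hKsub2⟩ := hdir K1 hK1 K2 hK2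
    obtain ⟨x, hxm, hxK⟩ := hmK K hK
    have hxV : x ∉ V ∩ W := by
      intro hx
      have : x ∈ m ∩ (V ∩ W) := ⟨hxm, hx⟩
      rw [hVW] at this
      exact this
    rcases not_and_or.1 hxV with hxV | hxW
    · have : x ∈ (m ∩ Vᶜ) ∩ K1 := ⟨⟨hxm, hxV⟩, hKsub1 hxK⟩
      rw [hK1e] at this; exact this
    · have : x ∈ (m ∩ Wᶜ) ∩ K2 := ⟨⟨hxm, hxW⟩, hKsub2 hxK⟩
      rw [hK2e] at this; exact this
  have hmne : m.Nonempty := by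
    obtain ⟨K0, hK0⟩ := hne
    obtain ⟨x, hx, -⟩ := hmK K0 hK0
    exact ⟨x, hx⟩
  obtain ⟨p, hpm, hmp⟩ := exists_generic hcont hmcl hmne hprime
  have hpK : ∀ K ∈ 𝒢, p ∈ K := by
    intro K hK
    obtain ⟨q, hqm, hqK⟩ := hmK K hK
    exact ((hmem K hK).2.2.isUpperSet) (hmp hqm) hqK
  have : p ∈ U := hsub (mem_sInter.2 hpK)
  exact hmU hpm this

end Aux

/-- In a continuous dcpo, a directed (under reverse inclusion) family of nonempty Scott
compact saturated sets has nonempty Scott compact saturated intersection. -/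
theorem stmt_17 (hcont : ContinuousDcpo L) (𝒢 : Set (Set L)) (hne : 𝒢.Nonempty)
    (hdir : DirectedOn (fun A B : Set L => B ⊆ A) 𝒢)
    (hmem : ∀ K ∈ 𝒢, K.Nonempty ∧ IsCompact K ∧ Saturated K) :
    (⋂₀ 𝒢).Nonempty ∧ IsCompact (⋂₀ 𝒢) ∧ Saturated (⋂₀ 𝒢) := by
  refine ⟨?_, ?_, ?_⟩
  · by_contra h
    rw [not_nonempty_iff_eq_empty] at h
    obtain ⟨K, hK, hKsub⟩ := well_filtered hcont 𝒢 hne hdir hmem isOpen_empty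
      (by rw [h])
    exact ((hmem K hK).1).ne_empty (subset_empty_iff.1 hKsub)
  · apply isCompact_of_finite_subcover
    intro ι Uo hUo hcov
    obtain ⟨K, hK, hKsub⟩ := well_filtered hcont 𝒢 hne hdir hmem (isOpen_iUnion hUo) hcov
    obtain ⟨t, ht⟩ := (hmem K hK).2.1.elim_finite_subcover Uo hUo hKsub
    exact ⟨t, (sInter_subset_of_mem hK).trans ht⟩
  · apply subset_antisymm
    · exact subset_sInter fun V hV => hV.2
    · intro x hx
      apply mem_sInter.2
      intro K hK
      rw [(hmem K hK).2.2]
      apply mem_sInter.2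
      intro V hV
      exact mem_sInter.1 hx V ⟨hV.1, (sInter_subset_of_mem hK).trans hV.2⟩
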